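/- Let d ≥ 1, P ⊆ ℝ^d, and let e_1 denote the first standard unit vector of ℝ^d. Let h, h' be length scales with 4 ≤ h ≤ h', let a ≥ 0 and a ≤ s ≤ a + 1, and suppose there exists a point x* ∈ P with |x* − (a+1)e_1| ≤ h/4. Then (as inequalities in [0,∞]): (i) d_{h',P}(0, s·e_1) ≤ d_{h,P}(0, a·e_1) + h, and (ii) d_{h',P}(0, (a+1)·e_1) ≤ d_{h',P}(0, s·e_1) + h'. -/

import Mathlib

open scoped ENNReal

noncomputable section

/-- A point in Euclidean space `ℝ^d`. -/
abbrev Pt (d : ℕ) := EuclideanSpace ℝ (Fin d)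

/-- `p = (p₀, …, p_m)` is an admissible path in `P` from `x` to `y` with step size `h`:
all its points lie in `P`, the first point is within `h/2` of `x`, the last within `h/2`
of `y`, and consecutive points are at distance at most `h`. (A path with `m + 1` points
corresponds to a path with `m` elements in the paper, which is always nonempty.) -/
def IsPath {d : ℕ} (P : Set (Pt d)) (h : ℝ) (x y : Pt d) {m : ℕ}
    (p : Fin (m + 1) → Pt d) : Prop :=
  (∀ i, p i ∈ P) ∧ dist x (p 0) ≤ h / 2 ∧ dist y (p (Fin.last m)) ≤ h / 2 ∧
    ∀ i : Fin m, dist (p i.castSucc) (p i.succ) ≤ h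

/-- The length `L(p)` of a path: the sum of the lengths of its hops. -/
def pathLength {d m : ℕ} (p : Fin (m + 1) → Pt d) : ℝ :=
  ∑ i : Fin m, dist (p i.castSucc) (p i.succ)

/-- The distance `d_{h,P}(x,y) ∈ [0,∞]`: the infimum of the lengths of admissible
paths in `P` from `x` to `y` with step size `h` (equal to `+∞` if there is none). -/
def graphDist {d : ℕ} (P : Set (Pt d)) (h : ℝ) (x y : Pt d) : ℝ≥0∞ :=
  ⨅ (m : ℕ) (p : Fin (m + 1) → Pt d) (_ : IsPath P h x y p),
    ENNReal.ofReal (pathLength p)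

lemma graphDist_snoc {d : ℕ} (P : Set (Pt d)) (h h' c : ℝ) (y z xstar : Pt d)
    (hx : xstar ∈ P) (hch : c ≤ h') (hhh' : h ≤ h') (hz : dist z xstar ≤ h' / 2)
    (hw : ∀ w : Pt d, dist y w ≤ h / 2 → dist w xstar ≤ c) :
    graphDist P h' 0 z ≤ graphDist P h 0 y + ENNReal.ofReal c := by
  conv_rhs => rw [graphDist]
  rw [ENNReal.iInf_add]
  refine le_iInf fun m => ?_
  rw [ENNReal.iInf_add]
  refine le_iInf fun p => ?_
  rw [ENNReal.iInf_add]
  refine le_iInf fun hp => ?_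
  obtain ⟨hmem, h0, hy, hstep⟩ := hp
  set q : Fin (m + 1 + 1) → Pt d := Fin.snoc p xstar with hqdef
  have hlastdist : dist (p (Fin.last m)) xstar ≤ c := hw _ hy
  have hlen : pathLength q = pathLength p + dist (p (Fin.last m)) xstar := by
    rw [pathLength, Fin.sum_univ_castSucc]
    simp [hqdef, pathLength, -Fin.castSucc_succ, Fin.succ_castSucc, Fin.succ_last]
  have hq : IsPath P h' 0 z q := by
    refine ⟨?_, ?_, ?_, ?_⟩
    · intro i
      refine Fin.lastCases ?_ ?_ i
      · simp [hqdef, hx]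
      · intro j; simpa [hqdef] using hmem j
    · have : q 0 = p 0 := by
        have h00 : (0 : Fin (m + 1 + 1)) = (0 : Fin (m + 1)).castSucc := rfl
        rw [hqdef, h00, Fin.snoc_castSucc]
      rw [this]; linarith [h0]
    · simpa [hqdef, Fin.succ_last] using hz
    · intro i
      refine Fin.lastCases ?_ ?_ i
      · simpa [hqdef, Fin.succ_last] using hlastdist.trans hch
      · intro j
        have := hstep j
        simpa [hqdef, -Fin.castSucc_succ, Fin.succ_castSucc] using this.trans hhh'
  refine le_trans ?_ (add_le_add_right (ENNReal.ofReal_le_ofReal hlastdist) _)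
  rw [← ENNReal.ofReal_add (show (0:ℝ) ≤ pathLength p from Finset.sum_nonneg fun i _ => dist_nonneg) dist_nonneg, ← hlen]
  exact iInf_le_of_le (m + 1) (iInf_le_of_le q (iInf_le _ hq))

/-- **Comparison of distances along `e₁`.** Let `e₁` be the first standard unit vector,
let `4 ≤ h ≤ h'`, `0 ≤ a`, `a ≤ s ≤ a + 1`, and assume there is a point `x* ∈ P` with
`|x* - (a+1)e₁| ≤ h/4`. Then (i) `d_{h',P}(0, s e₁) ≤ d_{h,P}(0, a e₁) + h` and
(ii) `d_{h',P}(0, (a+1) e₁) ≤ d_{h',P}(0, s e₁) + h'`, as inequalities in `[0,∞]`. -/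
theorem graphDist_interpolation {d : ℕ} (hd : 0 < d) (P : Set (Pt d)) (h h' : ℝ)
    (h4 : 4 ≤ h) (hhh' : h ≤ h') (a s : ℝ) (ha : 0 ≤ a) (has : a ≤ s) (hsa : s ≤ a + 1)
    (hstar : ∃ xstar ∈ P,
      dist xstar ((a + 1) • EuclideanSpace.single (⟨0, hd⟩ : Fin d) (1 : ℝ)) ≤ h / 4) :
    graphDist P h' 0 (s • EuclideanSpace.single (⟨0, hd⟩ : Fin d) (1 : ℝ)) ≤
        graphDist P h 0 (a • EuclideanSpace.single (⟨0, hd⟩ : Fin d) (1 : ℝ)) +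
          ENNReal.ofReal h ∧
      graphDist P h' 0 ((a + 1) • EuclideanSpace.single (⟨0, hd⟩ : Fin d) (1 : ℝ)) ≤
        graphDist P h' 0 (s • EuclideanSpace.single (⟨0, hd⟩ : Fin d) (1 : ℝ)) +
          ENNReal.ofReal h' := by
  obtain ⟨xstar, hxP, hxd⟩ := hstar
  set e : Pt d := EuclideanSpace.single (⟨0, hd⟩ : Fin d) (1 : ℝ) with he
  have hnorm : ‖e‖ = 1 := by simp [he]
  have hdist : ∀ t u : ℝ, dist (t • e) (u • e) = |t - u| := fun t u => by
    rw [dist_eq_norm, ← sub_smul, norm_smul, hnorm, mul_one, Real.norm_eq_abs]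
  have habs : |s - (a + 1)| ≤ 1 := abs_le.2 ⟨by linarith, by linarith⟩
  constructor
  · refine graphDist_snoc P h h' h _ _ xstar hxP hhh' hhh' ?_ ?_
    · calc dist (s • e) xstar ≤ dist (s • e) ((a + 1) • e) + dist ((a + 1) • e) xstar :=
            dist_triangle _ _ _
        _ ≤ 1 + h / 4 := by
            rw [hdist, dist_comm]; exact add_le_add habs hxd
        _ ≤ h' / 2 := by linarith
    · intro w hwd
      calc dist w xstar ≤ dist w (a • e) + dist (a • e) ((a + 1) • e) + dist ((a + 1) • e) xstar :=
            dist_triangle4 _ _ _ _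
        _ ≤ h / 2 + 1 + h / 4 := by
            rw [hdist, dist_comm ((a + 1) • e)]
            refine add_le_add (add_le_add (by rwa [dist_comm]) ?_) hxd
            rw [show a - (a + 1) = -1 by ring]; simp
        _ ≤ h := by linarith
  · refine graphDist_snoc P h' h' h' _ _ xstar hxP le_rfl le_rfl ?_ ?_
    · rw [dist_comm]; linarith
    · intro w hwd
      calc dist w xstar ≤ dist w (s • e) + dist (s • e) ((a + 1) • e) + dist ((a + 1) • e) xstar :=
            dist_triangle4 _ _ _ _
        _ ≤ h' / 2 + 1 + h / 4 := by
            rw [hdist, dist_comm ((a + 1) • e)]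
            exact add_le_add (add_le_add (by rwa [dist_comm]) habs) hxd
        _ ≤ h' := by linarith
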